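/- arXiv:1501.05718 — 3 statements merged into one kernel-verified Lean document; each statement's English description precedes it below -/
import Mathlib

section
/- (Monotone convergence for continuous gauge norms) If α is a continuous ‖·‖₁-dominating normalized gauge norm on L^∞(𝕋) and 0 ≤ f₁ ≤ f₂ ≤ ⋯ are measurable functions with fₙ → f a.e. (m), then α(fₙ) → α(f). -/
open MeasureTheory Complex Filter Topology Set ENNReal NNReal

noncomputable section

instance : Fact ((0:ℝ) < 1) := ⟨one_pos⟩

/-- The unit circle, modelled as `ℝ/ℤ`, with normalized Haar (arc-length) measure. -/
abbrev T1 : Type := AddCircle (1 : ℝ)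

/-- Normalized Haar measure on the circle. -/
abbrev hm : Measure T1 := volume

/-- The identity function `z` on the circle, as a complex-valued function. -/
def ztor : T1 → ℂ := fun t => fourier 1 t

/-- A `‖·‖₁`-dominating normalized gauge norm: a norm on `L^∞(𝕋)` with `α(1)=1`,
`α(|f|)=α(f)`, `α(f) ≥ ‖f‖₁`, extended to all measurable functions by
`α(f) = sup{α(s) : s simple, 0 ≤ s ≤ |f|}`.  Values are in `ℝ≥0∞`. -/
structure GaugeNorm where
  toFun : (T1 → ℂ) → ℝ≥0∞
  ae_congr' : ∀ f g : T1 → ℂ, f =ᵐ[hm] g → toFun f = toFun g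
  add_le' : ∀ f g : T1 → ℂ, toFun (f + g) ≤ toFun f + toFun g
  smul' : ∀ (c : ℂ) (f : T1 → ℂ), toFun (c • f) = ‖c‖₊ * toFun f
  norm_one' : toFun 1 = 1
  abs' : ∀ f : T1 → ℂ, toFun (fun x => ((‖f x‖ : ℝ) : ℂ)) = toFun f
  dominating' : ∀ f : T1 → ℂ, MemLp f ⊤ hm → eLpNorm f 1 hm ≤ toFun f
  ext_simple' : ∀ f : T1 → ℂ, AEMeasurable f hm →
    toFun f = ⨆ (s : MeasureTheory.SimpleFunc T1 ℝ)
        (_ : ∀ x, 0 ≤ s x ∧ s x ≤ ‖f x‖),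
      toFun (fun x => (s x : ℂ))

/-- Continuity of a gauge norm: `α(χ_E) → 0` as `m(E) → 0⁺`. -/
def GaugeNorm.IsCont (α : GaugeNorm) : Prop :=
  ∀ ε : ℝ≥0∞, 0 < ε → ∃ δ : ℝ≥0∞, 0 < δ ∧ ∀ E : Set T1, MeasurableSet E →
    hm E < δ → α.toFun (E.indicator 1) < ε

/-- Membership in `L^∞(𝕋)`. -/
def MemLinf (f : T1 → ℂ) : Prop := MemLp f ⊤ hm

/-- Membership in `H^∞`: bounded with vanishing negative Fourier coefficients. -/
def MemHinf (f : T1 → ℂ) : Prop :=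
  MemLp f ⊤ hm ∧ ∀ n : ℤ, n < 0 → fourierCoeff f n = 0

/-- Membership in the Hardy space `H¹`. -/
def MemH1 (f : T1 → ℂ) : Prop :=
  MemLp f 1 hm ∧ ∀ n : ℤ, n < 0 → fourierCoeff f n = 0

/-- Membership in `𝓛^α = {f : α(f) < ∞}`. -/
def GaugeNorm.MemLBig (α : GaugeNorm) (f : T1 → ℂ) : Prop :=
  AEMeasurable f hm ∧ α.toFun f < ⊤

/-- Membership in `L^α`, the `α`-closure of `L^∞` in `𝓛^α`. -/
def GaugeNorm.MemL (α : GaugeNorm) (f : T1 → ℂ) : Prop :=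
  α.MemLBig f ∧ ∀ ε : ℝ≥0∞, 0 < ε → ∃ g, MemLinf g ∧ α.toFun (f - g) < ε

/-- Membership in `H^α`, the `α`-closure of `H^∞`. -/
def GaugeNorm.MemH (α : GaugeNorm) (f : T1 → ℂ) : Prop :=
  α.MemLBig f ∧ ∀ ε : ℝ≥0∞, 0 < ε → ∃ g, MemHinf g ∧ α.toFun (f - g) < ε

/-- `W` is a linear subspace (of functions). -/
def IsSubspace (W : Set (T1 → ℂ)) : Prop :=
  0 ∈ W ∧ (∀ f g, f ∈ W → g ∈ W → f + g ∈ W) ∧ ∀ (c : ℂ) f, f ∈ W → c • f ∈ W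

/-- `zW ⊆ W` (up to a.e. equality). -/
def ZInvariant (W : Set (T1 → ℂ)) : Prop :=
  ∀ f ∈ W, ∃ g ∈ W, g =ᵐ[hm] fun x => ztor x * f x

/-- `W` is `α`-closed (in `L^α`). -/
def GaugeNorm.ClosedSet (α : GaugeNorm) (W : Set (T1 → ℂ)) : Prop :=
  ∀ f, α.MemL f → (∀ ε : ℝ≥0∞, 0 < ε → ∃ g ∈ W, α.toFun (f - g) < ε) →
    ∃ g ∈ W, f =ᵐ[hm] g

/-- `M` is weak*-closed in `L^∞ = (L¹)^*`: every `f ∈ L^∞` all of whose basic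
weak* neighborhoods meet `M` is (a.e. equal to an element) in `M`. -/
def IsWeakStarClosed (M : Set (T1 → ℂ)) : Prop :=
  ∀ f, MemLinf f →
    (∀ ε : ℝ, 0 < ε → ∀ S : Finset (T1 → ℂ), (∀ h ∈ S, Integrable h hm) →
      ∃ g ∈ M, ∀ h ∈ S, ‖∫ x, (g x - f x) * h x ∂hm‖ < ε) →
    ∃ g ∈ M, f =ᵐ[hm] g

/-- The dual norm `α′(f) = sup{∫|fh|dm : h ∈ L^∞, α(h) ≤ 1}`. -/
def GaugeNorm.dual (α : GaugeNorm) (f : T1 → ℂ) : ℝ≥0∞ :=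
  ⨆ (h : T1 → ℂ) (_ : MemLinf h ∧ α.toFun h ≤ 1),
    ∫⁻ x, (‖f x * h x‖₊ : ℝ≥0∞) ∂hm

/-- `W` is saturated under a.e. equality (within `L^α`). -/
def GaugeNorm.AESaturated (α : GaugeNorm) (W : Set (T1 → ℂ)) : Prop :=
  ∀ f g, f ∈ W → g =ᵐ[hm] f → α.MemL g → g ∈ W

private lemma gn_mono (α : GaugeNorm) {u v : T1 → ℝ} (hu : AEMeasurable u hm)
    (hv : AEMeasurable v hm) (h0 : ∀ x, 0 ≤ u x) (huv : ∀ x, u x ≤ v x) :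
    α.toFun (fun x => (u x : ℂ)) ≤ α.toFun (fun x => (v x : ℂ)) := by
  have hu' : AEMeasurable (fun x => (u x : ℂ)) hm := Complex.measurable_ofReal.comp_aemeasurable hu
  have hv' : AEMeasurable (fun x => (v x : ℂ)) hm := Complex.measurable_ofReal.comp_aemeasurable hv
  rw [α.ext_simple' (fun x => (u x : ℂ)) hu', α.ext_simple' (fun x => (v x : ℂ)) hv']
  refine iSup_le fun s => iSup_le fun hs => le_iSup₂_of_le s ?_ le_rfl
  intro x
  have h1 := hs x
  rw [Complex.norm_real, Real.norm_eq_abs, _root_.abs_of_nonneg (h0 x)] at h1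
  rw [Complex.norm_real, Real.norm_eq_abs, _root_.abs_of_nonneg ((h0 x).trans (huv x))]
  exact ⟨h1.1, h1.2.trans (huv x)⟩

private lemma gn_const (α : GaugeNorm) {C : ℝ} (hC : 0 ≤ C) :
    α.toFun (fun _ => ((C : ℝ) : ℂ)) = ENNReal.ofReal C := by
  have h : (fun _ : T1 => ((C : ℝ) : ℂ)) = (C : ℂ) • (1 : T1 → ℂ) := by
    funext x; simp
  rw [h, α.smul', α.norm_one', mul_one, Complex.nnnorm_real, ← enorm_eq_nnnorm, Real.enorm_eq_ofReal hC]

private lemma gn_indicator_const (α : GaugeNorm) {C : ℝ} (hC : 0 ≤ C) (E : Set T1) :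
    α.toFun (fun x => ((E.indicator (fun _ => C) x : ℝ) : ℂ))
      = ENNReal.ofReal C * α.toFun (E.indicator 1) := by
  have h : (fun x => ((E.indicator (fun _ => C) x : ℝ) : ℂ))
      = (C : ℂ) • (E.indicator (1 : T1 → ℂ)) := by
    funext x
    by_cases hx : x ∈ E <;> simp [Set.indicator_apply, hx]
  rw [h, α.smul', Complex.nnnorm_real, ← enorm_eq_nnnorm, Real.enorm_eq_ofReal hC]

/-- monotone convergence for continuous gauge norms. -/
theorem stmt3 (α : GaugeNorm) (hc : α.IsCont) (f : T1 → ℝ) (F : ℕ → T1 → ℝ)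
    (hmeas : ∀ n, AEMeasurable (F n) hm)
    (hpos : ∀ n, ∀ᵐ x ∂hm, 0 ≤ F n x)
    (hmono : ∀ n, ∀ᵐ x ∂hm, F n x ≤ F (n + 1) x)
    (hlim : ∀ᵐ x ∂hm, Tendsto (fun n => F n x) atTop (𝓝 (f x))) :
    Tendsto (fun n => α.toFun (fun x => (F n x : ℂ))) atTop
      (𝓝 (α.toFun (fun x => (f x : ℂ)))) := by
  classical
  have hfm : AEMeasurable f hm := aemeasurable_of_tendsto_metrizable_ae _ hmeas hlim
  set G' : ℕ → T1 → ℝ := fun n => (hmeas n).mk (F n) with hG'def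
  have hG' : ∀ n, F n =ᵐ[hm] G' n := fun n => (hmeas n).ae_eq_mk
  set g' : T1 → ℝ := hfm.mk f with hg'def
  set P : T1 → Prop := fun x => (∀ n, F n x = G' n x) ∧ (∀ n, 0 ≤ F n x) ∧
      (∀ n, F n x ≤ F (n + 1) x) ∧ Tendsto (fun n => F n x) atTop (𝓝 (f x)) ∧ f x = g' x
    with hPdef
  have hae : ∀ᵐ x ∂hm, P x :=
    ((ae_all_iff.2 hG').and ((ae_all_iff.2 hpos).and ((ae_all_iff.2 hmono).and
      (hlim.and hfm.ae_eq_mk))))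
  set N : Set T1 := toMeasurable hm {x | ¬ P x} with hNdef
  have hNm : MeasurableSet N := measurableSet_toMeasurable _ _
  have hN0 : hm N = 0 := by
    rw [hNdef, measure_toMeasurable]
    exact hae
  have hsub : ∀ x, x ∉ N → P x := fun x hx =>
    not_not.1 fun h => hx (subset_toMeasurable _ _ h)
  set G : ℕ → T1 → ℝ := fun n x => if x ∈ N then 0 else G' n x with hGdef
  set g : T1 → ℝ := fun x => if x ∈ N then 0 else g' x with hgdef
  have hGm : ∀ n, Measurable (G n) := fun n =>
    Measurable.ite hNm measurable_const (hmeas n).measurable_mk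
  have hgm : Measurable g := Measurable.ite hNm measurable_const hfm.measurable_mk
  have hNae : ∀ᵐ x ∂hm, x ∉ N := by
    rw [← measure_eq_zero_iff_ae_notMem] at *
    exact hN0
  have hGF : ∀ n, F n =ᵐ[hm] G n := fun n => hNae.mono fun x hx => by
    simp only [hGdef, if_neg hx]
    exact (hsub x hx).1 n
  have hgf : f =ᵐ[hm] g := hNae.mono fun x hx => by
    simp only [hgdef, if_neg hx]
    exact (hsub x hx).2.2.2.2
  have hG0 : ∀ n x, 0 ≤ G n x := by
    intro n x
    by_cases hx : x ∈ N
    · simp [hGdef, hx]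
    · simp only [hGdef, if_neg hx]
      rw [← (hsub x hx).1 n]
      exact (hsub x hx).2.1 n
  have hGmono : ∀ x, Monotone fun n => G n x := by
    intro x
    refine monotone_nat_of_le_succ fun n => ?_
    by_cases hx : x ∈ N
    · simp [hGdef, hx]
    · simp only [hGdef, if_neg hx]
      rw [← (hsub x hx).1 n, ← (hsub x hx).1 (n + 1)]
      exact (hsub x hx).2.2.1 n
  have hGlim : ∀ x, Tendsto (fun n => G n x) atTop (𝓝 (g x)) := by
    intro x
    by_cases hx : x ∈ N
    · simp only [hGdef, hgdef, if_pos hx]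
      exact tendsto_const_nhds
    · simp only [hGdef, hgdef, if_neg hx]
      have h1 : (fun n => G' n x) = fun n => F n x := by
        funext n; exact ((hsub x hx).1 n).symm
      rw [h1, ← (hsub x hx).2.2.2.2]
      exact (hsub x hx).2.2.2.1
  have hGle : ∀ n x, G n x ≤ g x := fun n x => (hGmono x).ge_of_tendsto (hGlim x) n
  have hg0 : ∀ x, 0 ≤ g x := fun x => (hG0 0 x).trans (hGle 0 x)
  have e1 : ∀ n, α.toFun (fun x => (F n x : ℂ)) = α.toFun (fun x => (G n x : ℂ)) :=
    fun n => α.ae_congr' _ _ ((hGF n).fun_comp fun r : ℝ => (r : ℂ))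
  have e2 : α.toFun (fun x => (f x : ℂ)) = α.toFun (fun x => (g x : ℂ)) :=
    α.ae_congr' _ _ (hgf.fun_comp fun r : ℝ => (r : ℂ))
  simp only [e1, e2]
  set L := ⨆ n, α.toFun (fun x => (G n x : ℂ)) with hLdef
  have hmonoα : Monotone fun n => α.toFun (fun x => (G n x : ℂ)) := fun n m hnm =>
    gn_mono α (hGm n).aemeasurable (hGm m).aemeasurable (hG0 n) fun x => hGmono x hnm
  have htend : Tendsto (fun n => α.toFun (fun x => (G n x : ℂ))) atTop (𝓝 L) :=
    tendsto_atTop_iSup hmonoα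
  have hle : L ≤ α.toFun (fun x => (g x : ℂ)) :=
    iSup_le fun n => gn_mono α (hGm n).aemeasurable hgm.aemeasurable (hG0 n) (hGle n)
  have hge : α.toFun (fun x => (g x : ℂ)) ≤ L := by
    have hg' : AEMeasurable (fun x => (g x : ℂ)) hm :=
      Complex.measurable_ofReal.comp_aemeasurable hgm.aemeasurable
    rw [α.ext_simple' (fun x => (g x : ℂ)) hg']
    refine iSup_le fun s => iSup_le fun hs => ?_
    have hs0 : ∀ x, 0 ≤ s x := fun x => (hs x).1
    have hsg : ∀ x, s x ≤ g x := fun x => by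
      have h2 := (hs x).2
      rwa [Complex.norm_real, Real.norm_eq_abs, _root_.abs_of_nonneg (hg0 x)] at h2
    obtain ⟨C0, hC0⟩ := s.exists_forall_le
    set C := max C0 0 with hCdef
    have hC : ∀ x, s x ≤ C := fun x => (hC0 x).trans (le_max_left _ _)
    have hCpos : (0 : ℝ) ≤ C := le_max_right _ _
    refine ENNReal.le_of_forall_pos_le_add fun ε hε hLt => ?_
    have hεR : (0 : ℝ) < (ε : ℝ) := hε
    have hden : (ENNReal.ofReal C + 1) ≠ 0 := by simp
    have hden' : (ENNReal.ofReal C + 1) ≠ ⊤ := by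
      simp [ENNReal.ofReal_ne_top]
    obtain ⟨δ, hδ0, hδ⟩ := hc (((ε : ℝ≥0∞) / 2) / (ENNReal.ofReal C + 1)) (by
      refine ENNReal.div_pos ?_ hden'
      simp [ENNReal.div_eq_zero_iff, hε.ne'])
    set E : ℕ → Set T1 := fun n => {x | s x ≤ G n x + (ε : ℝ) / 2} with hEdef
    have hEm : ∀ n, MeasurableSet (E n) := fun n =>
      measurableSet_le s.measurable ((hGm n).add_const _)
    have hEmono : Monotone E := by
      intro n m hnm x hx
      exact le_trans (show s x ≤ G n x + (ε : ℝ) / 2 from hx) (show G n x + (ε : ℝ) / 2 ≤ G m x + (ε : ℝ) / 2 by gcongr; exact hGmono x hnm)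
    have hEinter : ⋂ n, (E n)ᶜ = ∅ := by
      rw [Set.eq_empty_iff_forall_notMem]
      intro x hx
      have hev : ∀ᶠ n in atTop, g x - (ε : ℝ) / 2 < G n x :=
        (hGlim x).eventually (eventually_gt_nhds (by linarith))
      obtain ⟨n, hn⟩ := hev.exists
      exact Set.mem_iInter.1 hx n
        (by simp only [hEdef, Set.mem_setOf_eq]; have := hsg x; linarith)
    have hTm : Tendsto (fun n => hm ((E n)ᶜ)) atTop (𝓝 0) := by
      have h3 := tendsto_measure_iInter_atTop (μ := hm) (s := fun n => (E n)ᶜ)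
        (fun n => (hEm n).compl.nullMeasurableSet)
        (fun n m hnm => Set.compl_subset_compl.2 (hEmono hnm))
        ⟨0, measure_ne_top _ _⟩
      rwa [hEinter, measure_empty] at h3
    obtain ⟨n, hn⟩ := (hTm.eventually_lt_const hδ0).exists
    have hχ := hδ _ (hEm n).compl hn
    have hdec : (fun x => ((s x : ℝ) : ℂ)) =
        (fun x => (((E n).indicator (fun y => s y) x : ℝ) : ℂ)) +
        (fun x => ((((E n)ᶜ).indicator (fun y => s y) x : ℝ) : ℂ)) := by
      funext x
      by_cases hx : x ∈ E n <;> simp [Set.indicator_apply, hx]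
    have h1 : α.toFun (fun x => (((E n).indicator (fun y => s y) x : ℝ) : ℂ))
        ≤ α.toFun (fun x => (G n x : ℂ)) + (ε : ℝ≥0∞) / 2 := by
      have hle1 : ∀ x, (E n).indicator (fun y => s y) x ≤ G n x + (ε : ℝ) / 2 := by
        intro x
        by_cases hx : x ∈ E n
        · rw [Set.indicator_of_mem hx]; exact hx
        · simp only [Set.indicator_apply, if_neg hx]
          have := hG0 n x
          positivity
      have hmm := gn_mono α (s.measurable.indicator (hEm n)).aemeasurable
        ((hGm n).add_const _).aemeasurable
        (fun x => Set.indicator_nonneg (fun y _ => hs0 y) x) hle1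
      refine hmm.trans ?_
      have hsplit : (fun x => ((G n x + (ε : ℝ) / 2 : ℝ) : ℂ))
          = (fun x => (G n x : ℂ)) + fun _ => (((ε : ℝ) / 2 : ℝ) : ℂ) := by
        funext x
        push_cast
        rfl
      rw [hsplit]
      refine (α.add_le' _ _).trans ?_
      rw [gn_const α (by positivity)]
      gcongr
      rw [ENNReal.ofReal_div_of_pos two_pos, ENNReal.ofReal_coe_nnreal]
      norm_num
    have h2 : α.toFun (fun x => ((((E n)ᶜ).indicator (fun y => s y) x : ℝ) : ℂ))
        ≤ (ε : ℝ≥0∞) / 2 := by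
      have hle2 : ∀ x, ((E n)ᶜ).indicator (fun y => s y) x ≤ ((E n)ᶜ).indicator (fun _ => C) x := by
        intro x
        by_cases hx : x ∈ (E n)ᶜ <;> simp [Set.indicator_apply, hx, hC x]
      have hmm := gn_mono α (s.measurable.indicator (hEm n).compl).aemeasurable
        ((measurable_const (a := C)).indicator (hEm n).compl).aemeasurable
        (fun x => Set.indicator_nonneg (fun y _ => hs0 y) x) hle2
      refine hmm.trans ?_
      rw [gn_indicator_const α hCpos]
      calc ENNReal.ofReal C * α.toFun (((E n)ᶜ).indicator 1)
          ≤ (ENNReal.ofReal C + 1) * (((ε : ℝ≥0∞) / 2) / (ENNReal.ofReal C + 1)) := by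
            exact mul_le_mul' le_self_add hχ.le
        _ = (ε : ℝ≥0∞) / 2 := ENNReal.mul_div_cancel' (fun h => absurd h hden) (fun h => absurd h hden')
    calc α.toFun (fun x => (s x : ℂ))
        ≤ α.toFun (fun x => (((E n).indicator (fun y => s y) x : ℝ) : ℂ))
          + α.toFun (fun x => ((((E n)ᶜ).indicator (fun y => s y) x : ℝ) : ℂ)) := by
          rw [hdec]
          exact α.add_le' _ _
      _ ≤ (α.toFun (fun x => (G n x : ℂ)) + (ε : ℝ≥0∞) / 2) + (ε : ℝ≥0∞) / 2 :=
          add_le_add h1 h2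
      _ ≤ L + (ε : ℝ≥0∞) := by
          rw [add_assoc, ENNReal.add_halves]
          gcongr
          rw [hLdef]
          exact le_iSup (fun k => α.toFun fun x => ((G k x : ℝ) : ℂ)) n
  rw [le_antisymm hge hle]
  exact htend
end
end

section
/- If α is a continuous ‖·‖₁-dominating normalized gauge norm on L^∞(𝕋), then 𝓛^α = {f measurable : α(f) < ∞} is a Banach space under the norm α (every absolutely convergent series in 𝓛^α converges in 𝓛^α). -/
open MeasureTheory Complex Filter Topology Set ENNReal NNReal

noncomputable section

lemma GaugeNorm.zero_eq (α : GaugeNorm) : α.toFun 0 = 0 := by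
  have h := α.smul' 0 1
  simpa using h

lemma GaugeNorm.mono (α : GaugeNorm) {f g : T1 → ℂ} (hf : AEMeasurable f hm)
    (hg : AEMeasurable g hm)
    (h : ∀ᵐ x ∂hm, ‖f x‖ ≤ ‖g x‖) :
    α.toFun f ≤ α.toFun g := by
  rw [α.ext_simple' f hf, α.ext_simple' g hg]
  refine iSup₂_le fun s hs => ?_
  obtain ⟨N, hNsub, hNmeas, hN0⟩ := exists_measurable_superset_of_null (ae_iff.mp h)
  set s' : MeasureTheory.SimpleFunc T1 ℝ := MeasureTheory.SimpleFunc.piecewise N hNmeas 0 s with hs'def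
  have hnm : ∀ᵐ x ∂hm, x ∉ N := measure_eq_zero_iff_ae_notMem.mp hN0
  have hcond : ∀ x, 0 ≤ s' x ∧ s' x ≤ ‖g x‖ := by
    intro x
    by_cases hx : x ∈ N
    · simp [hs'def, MeasureTheory.SimpleFunc.piecewise_apply, hx]
    · have hP : ‖f x‖ ≤ ‖g x‖ := by
        by_contra hPx
        exact hx (hNsub hPx)
      simp only [hs'def, MeasureTheory.SimpleFunc.piecewise_apply, if_neg hx,
        MeasureTheory.SimpleFunc.coe_zero]
      exact ⟨(hs x).1, le_trans (hs x).2 hP⟩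
  refine le_iSup₂_of_le s' hcond (le_of_eq ?_)
  refine α.ae_congr' _ _ ?_
  filter_upwards [hnm] with x hx
  simp [hs'def, MeasureTheory.SimpleFunc.piecewise_apply, if_neg hx]
lemma GaugeNorm.l1_le (α : GaugeNorm) (f : T1 → ℂ) (hf : AEMeasurable f hm) :
    eLpNorm f 1 hm ≤ α.toFun f := by
  set f' := hf.mk f with hf'def
  have hmeq : f =ᵐ[hm] f' := hf.ae_eq_mk
  rw [eLpNorm_congr_ae hmeq, α.ae_congr' f f' hmeq]
  rw [α.ext_simple' f' hf.measurable_mk.aemeasurable]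
  rw [eLpNorm_one_eq_lintegral_enorm, lintegral_eq_nnreal (fun x => ‖f' x‖ₑ) hm]
  refine iSup₂_le fun φ hφ => ?_
  set s : MeasureTheory.SimpleFunc T1 ℝ := φ.map ((↑) : ℝ≥0 → ℝ) with hsdef
  have hcond : ∀ x, 0 ≤ s x ∧ s x ≤ ‖f' x‖ := by
    intro x
    refine ⟨(φ x).coe_nonneg, ?_⟩
    have : (φ x : ℝ≥0∞) ≤ ‖f' x‖₊ := hφ x
    have h2 : (φ x : ℝ) ≤ ‖f' x‖ := by exact_mod_cast this
    simpa [hsdef] using h2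
  refine le_iSup₂_of_le s hcond ?_
  have hsc : MeasureTheory.SimpleFunc T1 ℂ := φ.map (fun r : ℝ≥0 => ((r : ℝ) : ℂ))
  have hmem : MemLp (fun x => ((s x : ℝ) : ℂ)) ⊤ hm := by
    have := (φ.map (fun r : ℝ≥0 => ((r : ℝ) : ℂ))).memLp_top hm
    simpa [MeasureTheory.SimpleFunc.coe_map, Function.comp_def, hsdef] using this
  have hdom := α.dominating' _ hmem
  refine le_trans (le_of_eq ?_) hdom
  calc (φ.map ((↑) : ℝ≥0 → ℝ≥0∞)).lintegral hm
      = ∫⁻ x, (φ.map ((↑) : ℝ≥0 → ℝ≥0∞)) x ∂hm :=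
        ((φ.map ((↑) : ℝ≥0 → ℝ≥0∞)).lintegral_eq_lintegral hm).symm
    _ = eLpNorm (fun x => ((s x : ℝ) : ℂ)) 1 hm := by
        rw [eLpNorm_one_eq_lintegral_enorm]
        refine lintegral_congr fun x => ?_
        simp [hsdef]
        rw [← ofReal_norm, Complex.norm_real, Real.norm_eq_abs, NNReal.abs_eq, ENNReal.ofReal_coe_nnreal]

lemma GaugeNorm.sum_le (α : GaugeNorm) (s : Finset ℕ) (f : ℕ → T1 → ℂ) :
    α.toFun (fun x => ∑ n ∈ s, f n x) ≤ ∑ n ∈ s, α.toFun (f n) := by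
  classical
  induction s using Finset.induction with
  | empty => simpa [Pi.zero_def] using le_of_eq α.zero_eq
  | insert a s ha ih =>
      have heq : (fun x => ∑ n ∈ insert a s, f n x)
          = f a + fun x => ∑ n ∈ s, f n x := by
        funext x; simp [Finset.sum_insert ha]
      rw [heq, Finset.sum_insert ha]
      exact le_trans (α.add_le' _ _) (add_le_add le_rfl ih)
lemma GaugeNorm.key (α : GaugeNorm) (hc : α.IsCont) (g : T1 → ℂ) (hg : AEMeasurable g hm)
    (H : ℕ → T1 → ℝ) (hHm : ∀ M, Measurable (H M)) (hH0 : ∀ M x, 0 ≤ H M x)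
    (hHmono : ∀ x, Monotone fun M => H M x)
    (hle : ∀ᵐ x ∂hm, (‖g x‖₊ : ℝ≥0∞) ≤ ⨆ M, ENNReal.ofReal (H M x))
    (t : ℝ≥0∞) (ht : ∀ M, α.toFun (fun x => ((H M x : ℝ) : ℂ)) ≤ t) :
    α.toFun g ≤ 2 * t := by
  rw [α.ext_simple' g hg]
  refine iSup₂_le fun s hs => ?_
  obtain ⟨C, hC⟩ := s.exists_forall_norm_le
  have hC0 : 0 ≤ C := le_trans (norm_nonneg _) (hC (Classical.arbitrary T1))
  set Cn : ℝ≥0 := C.toNNReal with hCndef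
  refine ENNReal.le_of_forall_pos_le_add fun ε hε h2t => ?_
  -- choose δ from continuity
  have hεE : (0 : ℝ≥0∞) < (ε : ℝ≥0∞) / (Cn + 1) :=
    ENNReal.div_pos (by exact_mod_cast hε.ne') (by simp)
  obtain ⟨δ, hδ0, hδ⟩ := hc _ hεE
  obtain ⟨Z, hZsub, hZmeas, hZ0⟩ := exists_measurable_superset_of_null (ae_iff.mp hle)
  set E : ℕ → Set T1 := fun M => {x | (s x : ℝ) ≤ 2 * H M x} ∪ Z with hEdef
  have hEmeas : ∀ M, MeasurableSet (E M) := fun M =>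
    (measurableSet_le s.measurable ((hHm M).const_mul 2)).union hZmeas
  have hEmono : Monotone E := by
    intro M M' hMM'
    refine Set.union_subset_union_left _ fun x hx => ?_
    simp only [Set.mem_setOf_eq] at hx ⊢
    have := hHmono x hMM'
    linarith
  have hEunion : (⋃ M, E M) = Set.univ := by
    refine Set.eq_univ_of_forall fun x => ?_
    by_cases hxZ : x ∈ Z
    · exact Set.mem_iUnion.mpr ⟨0, Or.inr hxZ⟩
    · have hP : (‖g x‖₊ : ℝ≥0∞) ≤ ⨆ M, ENNReal.ofReal (H M x) := by
        by_contra hPx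
        exact hxZ (hZsub hPx)
      rcases le_or_gt (s x) 0 with hsx | hsx
      · refine Set.mem_iUnion.mpr ⟨0, Or.inl ?_⟩
        simp only [Set.mem_setOf_eq]
        have := hH0 0 x
        linarith
      · have h1 : ENNReal.ofReal (s x / 2) < ⨆ M, ENNReal.ofReal (H M x) := by
          have ha : ENNReal.ofReal (s x / 2) < ENNReal.ofReal (s x) :=
            (ENNReal.ofReal_lt_ofReal_iff hsx).mpr (by linarith)
          have hb : ENNReal.ofReal (s x) ≤ (‖g x‖₊ : ℝ≥0∞) := by
            rw [← enorm_eq_nnnorm, ← ofReal_norm]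
            exact ENNReal.ofReal_le_ofReal ((hs x).2)
          exact lt_of_lt_of_le ha (le_trans hb hP)
        obtain ⟨M, hM⟩ := lt_iSup_iff.mp h1
        have h2 : s x / 2 < H M x := by
          by_contra hcon
          exact absurd (ENNReal.ofReal_le_ofReal (not_lt.mp hcon)) (not_le.mpr hM)
        refine Set.mem_iUnion.mpr ⟨M, Or.inl ?_⟩
        simp only [Set.mem_setOf_eq]
        linarith
  -- measure of complements tends to zero
  have hμ : Tendsto (fun M => hm (E M)ᶜ) atTop (𝓝 0) := by
    have h1 := tendsto_measure_iInter_atTop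
      (fun M => (hEmeas M).compl.nullMeasurableSet)
      (fun M M' hMM' => Set.compl_subset_compl.mpr (hEmono hMM'))
      ⟨0, measure_ne_top hm _⟩
    have h2 : (⋂ M, (E M)ᶜ) = ∅ := by
      rw [← Set.compl_iUnion, hEunion, Set.compl_univ]
    rw [h2] at h1
    simpa [Function.comp_def] using h1
  obtain ⟨M, hM⟩ := (hμ.eventually_lt_const hδ0).exists
  have hχ := hδ _ (hEmeas M).compl hM
  -- split s
  have hsplit : (fun x => ((s x : ℝ) : ℂ))
      = (E M).indicator (fun x => ((s x : ℝ) : ℂ))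
        + (E M)ᶜ.indicator (fun x => ((s x : ℝ) : ℂ)) := by
    funext x
    by_cases hx : x ∈ E M <;> simp [Set.indicator_apply, hx]
  have hsm : Measurable fun x => ((s x : ℝ) : ℂ) :=
    Complex.measurable_ofReal.comp s.measurable
  have hnm : ∀ᵐ x ∂hm, x ∉ Z := measure_eq_zero_iff_ae_notMem.mp hZ0
  -- first indicator
  have h1 : α.toFun ((E M).indicator fun x => ((s x : ℝ) : ℂ)) ≤ 2 * t := by
    have hmono : α.toFun ((E M).indicator fun x => ((s x : ℝ) : ℂ))
        ≤ α.toFun (fun x => ((2 * H M x : ℝ) : ℂ)) := by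
      refine α.mono ((hsm.indicator (hEmeas M)).aemeasurable)
        ((Complex.measurable_ofReal.comp ((hHm M).const_mul 2)).aemeasurable) ?_
      filter_upwards [hnm] with x hxZ
      by_cases hx : x ∈ E M
      · have hxgood : s x ≤ 2 * H M x := by
          rcases hx with hx | hx
          · exact hx
          · exact absurd hx hxZ
        simp only [Set.indicator_of_mem hx]
        rw [Complex.norm_real, Complex.norm_real, Real.norm_eq_abs, Real.norm_eq_abs]
        rw [_root_.abs_of_nonneg (hs x).1,
          _root_.abs_of_nonneg (by have := hH0 M x; linarith)]
        exact hxgood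
      · simp only [Set.indicator_of_notMem hx]
        simp
    refine le_trans hmono ?_
    have heq : (fun x => ((2 * H M x : ℝ) : ℂ)) = (2 : ℂ) • fun x => ((H M x : ℝ) : ℂ) := by
      funext x
      simp only [Pi.smul_apply, smul_eq_mul]
      push_cast
      ring
    rw [heq, α.smul']
    have : (‖(2 : ℂ)‖₊ : ℝ≥0∞) = 2 := by simp
    rw [this]
    exact mul_le_mul_right (ht M) 2
  -- second indicator
  have h2 : α.toFun ((E M)ᶜ.indicator fun x => ((s x : ℝ) : ℂ)) ≤ ε / (Cn + 1) * Cn := by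
    have hmono : α.toFun ((E M)ᶜ.indicator fun x => ((s x : ℝ) : ℂ))
        ≤ α.toFun (((Cn : ℝ) : ℂ) • (E M)ᶜ.indicator (1 : T1 → ℂ)) := by
      refine α.mono ((hsm.indicator (hEmeas M).compl).aemeasurable) ?_ ?_
      · exact (aemeasurable_const.indicator (hEmeas M).compl).const_smul _
      · refine Filter.Eventually.of_forall fun x => ?_
        by_cases hx : x ∈ (E M)ᶜ
        · simp only [Set.indicator_of_mem hx, Pi.smul_apply, Pi.one_apply, smul_eq_mul, mul_one]
          rw [Complex.norm_real, Complex.norm_real, Real.norm_eq_abs, Real.norm_eq_abs, _root_.abs_of_nonneg (hs x).1,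
            _root_.abs_of_nonneg (by positivity)]
          calc s x ≤ C := le_trans (le_abs_self _) (hC x)
            _ ≤ (Cn : ℝ) := Real.le_coe_toNNReal C
        · simp [Set.indicator_of_notMem hx]
    refine le_trans hmono ?_
    rw [α.smul']
    have hnrm : (‖((Cn : ℝ) : ℂ)‖₊ : ℝ≥0∞) = (Cn : ℝ≥0∞) := by
      simp
    rw [hnrm]
    calc (Cn : ℝ≥0∞) * α.toFun ((E M)ᶜ.indicator 1)
        ≤ (Cn : ℝ≥0∞) * ((ε : ℝ≥0∞) / (Cn + 1)) := mul_le_mul_right hχ.le _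
      _ = (ε : ℝ≥0∞) / (Cn + 1) * Cn := mul_comm _ _
  calc α.toFun (fun x => ((s x : ℝ) : ℂ))
      ≤ α.toFun ((E M).indicator fun x => ((s x : ℝ) : ℂ))
        + α.toFun ((E M)ᶜ.indicator fun x => ((s x : ℝ) : ℂ)) := by
        conv_lhs => rw [hsplit]
        exact α.add_le' _ _
    _ ≤ 2 * t + ε / (Cn + 1) * Cn := add_le_add h1 h2
    _ ≤ 2 * t + ε := by
        refine add_le_add le_rfl ?_
        calc (ε : ℝ≥0∞) / (Cn + 1) * Cn ≤ (ε : ℝ≥0∞) / (Cn + 1) * (Cn + 1) :=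
              mul_le_mul_right (self_le_add_right _ _) _
          _ = ε := ENNReal.div_mul_cancel (by simp) (by simp)
/-- for continuous `α`, `𝓛^α` is complete: every absolutely
convergent series in `𝓛^α` converges in `𝓛^α`. -/
theorem stmt4 (α : GaugeNorm) (hc : α.IsCont) (F : ℕ → T1 → ℂ)
    (hF : ∀ n, α.MemLBig (F n))
    (habs : (∑' n, α.toFun (F n)) < ⊤) :
    ∃ f : T1 → ℂ, α.MemLBig f ∧
      Tendsto (fun N => α.toFun (f - fun x => ∑ n ∈ Finset.range N, F n x))
        atTop (𝓝 0) := by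
  classical
  set F' : ℕ → T1 → ℂ := fun n => (hF n).1.mk (F n) with hF'def
  have hFm : ∀ n, Measurable (F' n) := fun n => (hF n).1.measurable_mk
  have hFe : ∀ n, F n =ᵐ[hm] F' n := fun n => (hF n).1.ae_eq_mk
  have hαF : ∀ n, α.toFun (F' n) = α.toFun (F n) := fun n =>
    α.ae_congr' _ _ (hFe n).symm
  set t : ℕ → ℝ≥0∞ := fun N => ∑' k, α.toFun (F (k + N)) with htdef
  have ht0 : t 0 = ∑' n, α.toFun (F n) := by simp [htdef]
  set G : T1 → ℝ≥0∞ := fun x => ∑' n, (‖F' n x‖₊ : ℝ≥0∞) with hGdef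
  have hGm : Measurable G := Measurable.ennreal_tsum fun n => (hFm n).enorm
  have hGint : ∫⁻ x, G x ∂hm < ⊤ := by
    calc ∫⁻ x, G x ∂hm = ∑' n, ∫⁻ x, (‖F' n x‖₊ : ℝ≥0∞) ∂hm :=
          lintegral_tsum fun n => ((hFm n).enorm.aemeasurable)
      _ ≤ ∑' n, α.toFun (F n) := by
          refine ENNReal.tsum_le_tsum fun n => ?_
          have h1 : ∫⁻ x, (‖F' n x‖₊ : ℝ≥0∞) ∂hm = eLpNorm (F' n) 1 hm :=
            (eLpNorm_one_eq_lintegral_enorm (f := F' n)).symm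
          rw [h1, ← hαF n]
          exact α.l1_le _ (hFm n).aemeasurable
      _ < ⊤ := habs
  have hGae : ∀ᵐ x ∂hm, G x < ⊤ := ae_lt_top hGm hGint.ne
  have hsumn : ∀ x, G x < ⊤ → Summable fun n => ‖F' n x‖ := by
    intro x hx
    have h1 : Summable fun n => ‖F' n x‖₊ := ENNReal.tsum_coe_ne_top_iff_summable.mp hx.ne
    simpa [coe_nnnorm] using NNReal.summable_coe.mpr h1
  set f : T1 → ℂ := fun x => ∑' n, F' n x with hfdef
  set S : ℕ → T1 → ℂ := fun N x => ∑ n ∈ Finset.range N, F' n x with hSdef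
  have hSm : ∀ N, Measurable (S N) := fun N =>
    Finset.measurable_sum _ fun n _ => hFm n
  have hfm : AEMeasurable f hm := by
    refine aemeasurable_of_tendsto_metrizable_ae atTop (fun N => (hSm N).aemeasurable) ?_
    filter_upwards [hGae] with x hx
    exact ((hsumn x hx).of_norm).hasSum.tendsto_sum_nat
  have hbound : ∀ N, α.toFun (f - S N) ≤ 2 * t N := by
    intro N
    set H : ℕ → T1 → ℝ := fun M x => ∑ k ∈ Finset.range M, ‖F' (k + N) x‖
      with hHdef
    have hHm : ∀ M, Measurable (H M) := fun M =>
      Finset.measurable_sum _ fun k _ => continuous_norm.measurable.comp (hFm (k + N))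
    have hH0 : ∀ M x, 0 ≤ H M x := fun M x =>
      Finset.sum_nonneg fun k _ => norm_nonneg _
    have hHmono : ∀ x, Monotone fun M => H M x := fun x =>
      monotone_nat_of_le_succ fun M => by
        show (∑ k ∈ Finset.range M, ‖F' (k + N) x‖)
            ≤ ∑ k ∈ Finset.range (M + 1), ‖F' (k + N) x‖
        rw [Finset.sum_range_succ]
        exact le_add_of_nonneg_right (norm_nonneg _)
    have hle : ∀ᵐ x ∂hm, (‖(f - S N) x‖₊ : ℝ≥0∞) ≤ ⨆ M, ENNReal.ofReal (H M x) := by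
      filter_upwards [hGae] with x hx
      have hsx : Summable fun n => F' n x := (hsumn x hx).of_norm
      have htail_norm : Summable fun k => ‖F' (k + N) x‖ :=
        (_root_.summable_nat_add_iff N).mpr (hsumn x hx)
      have heqx : (f - S N) x = ∑' k, F' (k + N) x := by
        have h := Summable.sum_add_tsum_nat_add (f := fun n => F' n x) N hsx
        have h2 : (∑' k, F' (k + N) x) = (∑' n, F' n x) - ∑ n ∈ Finset.range N, F' n x :=
          eq_sub_of_add_eq' h
        simpa [hfdef, hSdef, Pi.sub_apply] using h2.symm
      rw [heqx]
      have hnorm : ‖∑' k, F' (k + N) x‖ ≤ ∑' k, ‖F' (k + N) x‖ :=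
        norm_tsum_le_tsum_norm htail_norm
      calc ((‖∑' k, F' (k + N) x‖₊ : ℝ≥0∞))
          = ENNReal.ofReal ‖∑' k, F' (k + N) x‖ := (ofReal_norm _).symm
        _ ≤ ENNReal.ofReal (∑' k, ‖F' (k + N) x‖) := ENNReal.ofReal_le_ofReal hnorm
        _ = ∑' k, ENNReal.ofReal ‖F' (k + N) x‖ :=
            ENNReal.ofReal_tsum_of_nonneg (fun k => norm_nonneg _) htail_norm
        _ = ⨆ M, ∑ k ∈ Finset.range M, ENNReal.ofReal ‖F' (k + N) x‖ :=
            ENNReal.tsum_eq_iSup_nat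
        _ ≤ ⨆ M, ENNReal.ofReal (H M x) := by
            refine iSup_mono fun M => le_of_eq ?_
            rw [ENNReal.ofReal_sum_of_nonneg fun k _ => norm_nonneg _]
    have ht : ∀ M, α.toFun (fun x => ((H M x : ℝ) : ℂ)) ≤ t N := by
      intro M
      have heq : (fun x => ((H M x : ℝ) : ℂ))
          = fun x => ∑ k ∈ Finset.range M, ((‖F' (k + N) x‖ : ℝ) : ℂ) := by
        funext x
        simp only [hHdef]
        push_cast
        rfl
      rw [heq]
      calc α.toFun (fun x => ∑ k ∈ Finset.range M, ((‖F' (k + N) x‖ : ℝ) : ℂ))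
          ≤ ∑ k ∈ Finset.range M,
              α.toFun (fun x => ((‖F' (k + N) x‖ : ℝ) : ℂ)) :=
            α.sum_le _ _
        _ = ∑ k ∈ Finset.range M, α.toFun (F' (k + N)) :=
            Finset.sum_congr rfl fun k _ => α.abs' (F' (k + N))
        _ = ∑ k ∈ Finset.range M, α.toFun (F (k + N)) :=
            Finset.sum_congr rfl fun k _ => hαF _
        _ ≤ t N := ENNReal.sum_le_tsum _
    exact α.key hc (f - S N) (hfm.sub (hSm N).aemeasurable) H hHm hH0 hHmono hle (t N) ht
  have hSae : ∀ N, α.toFun (f - fun x => ∑ n ∈ Finset.range N, F n x) = α.toFun (f - S N) := by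
    intro N
    refine α.ae_congr' _ _ ?_
    have hall : ∀ᵐ x ∂hm, ∀ n, F n x = F' n x := ae_all_iff.mpr fun n => hFe n
    filter_upwards [hall] with x hx
    simp only [Pi.sub_apply, hSdef]
    congr 1
    exact Finset.sum_congr rfl fun n _ => hx n
  have hf0 : α.toFun f ≤ 2 * t 0 := by
    have h := hbound 0
    have h2 : f - S 0 = f := by
      funext x
      simp [hSdef]
    rwa [h2] at h
  have hft : α.toFun f < ⊤ := by
    refine lt_of_le_of_lt hf0 ?_
    rw [ht0]
    exact ENNReal.mul_lt_top (by norm_num) habs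
  refine ⟨f, ⟨hfm, hft⟩, ?_⟩
  have htt : Tendsto t atTop (𝓝 0) := ENNReal.tendsto_sum_nat_add _ habs.ne
  have h2t : Tendsto (fun N => 2 * t N) atTop (𝓝 0) := by
    have h := ENNReal.Tendsto.const_mul htt (Or.inr (ENNReal.ofNat_ne_top (n := 2)))
    simpa using h
  refine tendsto_of_tendsto_of_tendsto_of_le_of_le tendsto_const_nhds h2t
    (fun N => bot_le) (fun N => ?_)
  rw [hSae N]
  exact hbound N
end
end

section
/- Let α be a continuous ‖·‖₁-dominating normalized gauge norm on L^∞(𝕋). Then the closed unit ball 𝔹 = {f ∈ L^∞ : ‖f‖_∞ ≤ 1} is closed in L^α with respect to the norm α. -/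
open MeasureTheory Complex Filter Topology Set ENNReal NNReal

noncomputable section

/-- the closed unit ball `𝔹` of `L^∞` is `α`-closed in `L^α`. -/
theorem stmt10 (α : GaugeNorm) (hc : α.IsCont) (f : T1 → ℂ) (hf : α.MemL f)
    (happrox : ∀ ε : ℝ≥0∞, 0 < ε → ∃ g : T1 → ℂ,
      (MemLinf g ∧ eLpNorm g ⊤ hm ≤ 1) ∧ α.toFun (f - g) < ε) :
    eLpNorm f ⊤ hm ≤ 1 := by
  obtain ⟨⟨hfm, _⟩, _⟩ := hf
  set f' : T1 → ℂ := hfm.mk f with hf'def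
  have hf'meas : Measurable f' := hfm.measurable_mk
  have hff' : f =ᵐ[hm] f' := hfm.ae_eq_mk
  -- key claim: for every δ > 0, the set {|f'| > 1 + δ} is null
  have key : ∀ δ : ℝ, 0 < δ → hm {x | 1 + δ < ‖f' x‖} = 0 := by
    intro δ hδ
    set E : Set T1 := {x | 1 + δ < ‖f' x‖} with hEdef
    have hE : MeasurableSet E := by
      have : Measurable fun x => ‖f' x‖ := hf'meas.norm
      exact measurableSet_lt measurable_const this
    have hle : ∀ ε : ℝ≥0∞, 0 < ε → ENNReal.ofReal δ * hm E ≤ ε := by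
      intro ε hε
      obtain ⟨g, ⟨hgL, hg1⟩, hαg⟩ := happrox ε hε
      -- modify g to be pointwise bounded by 1
      set g' : T1 → ℂ := fun x => if ‖g x‖ ≤ 1 then g x else 0 with hg'def
      have hg'bd : ∀ x, ‖g' x‖ ≤ 1 := by
        intro x
        by_cases h : ‖g x‖ ≤ 1 <;> simp [hg'def, h]
      have hgg' : g =ᵐ[hm] g' := by
        have h1 : ∀ᵐ x ∂hm, (‖g x‖₊ : ℝ≥0∞) ≤ eLpNormEssSup g hm :=
          ae_le_eLpNormEssSup
        have h2 : eLpNormEssSup g hm ≤ 1 := by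
          rwa [eLpNorm_exponent_top] at hg1
        filter_upwards [h1] with x hx
        have : (‖g x‖₊ : ℝ≥0∞) ≤ 1 := le_trans hx h2
        have hb : ‖g x‖ ≤ 1 := by
          have := ENNReal.coe_le_coe.mp (by simpa using this)
          simpa [← coe_nnnorm] using this
        simp [hg'def, hb]
      have hae : (f - g) =ᵐ[hm] (f' - g') := by
        filter_upwards [hff', hgg'] with x h1 h2
        simp [h1, h2]
      have hαeq : α.toFun (f - g) = α.toFun (f' - g') := α.ae_congr' _ _ hae
      -- the simple function δ · 1_E
      set s : MeasureTheory.SimpleFunc T1 ℝ :=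
        MeasureTheory.SimpleFunc.piecewise E hE
          (MeasureTheory.SimpleFunc.const T1 δ)
          (MeasureTheory.SimpleFunc.const T1 0) with hsdef
      have hs_apply : ∀ x, s x = if x ∈ E then δ else 0 := by
        intro x
        simp [hsdef, MeasureTheory.SimpleFunc.piecewise_apply, Set.indicator]
      have hsbound : ∀ x, 0 ≤ s x ∧ s x ≤ ‖(f' - g') x‖ := by
        intro x
        rw [hs_apply]
        by_cases hx : x ∈ E
        · simp only [hx, if_true]
          constructor
          · exact hδ.le
          · have h1 : 1 + δ < ‖f' x‖ := hx
            have h2 : ‖g' x‖ ≤ 1 := hg'bd x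
            have h3 : ‖f' x‖ - ‖g' x‖ ≤
                ‖f' x - g' x‖ := by
              simpa using norm_sub_norm_le (f' x) (g' x)
            have : δ ≤ ‖f' x - g' x‖ := by linarith
            simpa using this
        · simp only [hx, if_false]
          exact ⟨le_refl 0, norm_nonneg _⟩
      have hg'meas : AEMeasurable g' hm := (hgL.aestronglyMeasurable.aemeasurable).congr hgg'
      have hsub_meas : AEMeasurable (f' - g') hm :=
        hf'meas.aemeasurable.sub hg'meas
      -- α(s) ≤ α(f' - g')
      have hαs : α.toFun (fun x => ((s x : ℝ) : ℂ)) ≤ α.toFun (f' - g') := by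
        rw [α.ext_simple' _ hsub_meas]
        exact le_iSup₂ (f := fun (t : MeasureTheory.SimpleFunc T1 ℝ)
          (_ : ∀ x, 0 ≤ t x ∧ t x ≤ ‖(f' - g') x‖) =>
          α.toFun (fun x => ((t x : ℝ) : ℂ))) s hsbound
      -- s is in L^∞
      have hsL : MemLp (fun x => ((s x : ℝ) : ℂ)) ⊤ hm := by
        apply memLp_top_of_bound
          (C := δ)
          ((Complex.measurable_ofReal.comp s.measurable).aestronglyMeasurable :
            AEStronglyMeasurable (fun x => ((s x : ℝ) : ℂ)) hm)
        filter_upwards with x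
        show ‖((s x : ℝ) : ℂ)‖ ≤ δ
        rw [hs_apply]
        by_cases hx : x ∈ E <;> simp [hx, _root_.abs_of_nonneg hδ.le, hδ.le]
      have hdom := α.dominating' _ hsL
      -- compute the L¹ norm of s
      have hsnorm : eLpNorm (fun x => ((s x : ℝ) : ℂ)) 1 hm
          = ENNReal.ofReal δ * hm E := by
        rw [eLpNorm_one_eq_lintegral_enorm]
        have : ∀ x, (‖((s x : ℝ) : ℂ)‖₊ : ℝ≥0∞)
            = E.indicator (fun _ => ENNReal.ofReal δ) x := by
          intro x
          rw [hs_apply]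
          by_cases hx : x ∈ E
          · simp [hx, Set.indicator_of_mem, ← enorm_eq_nnnorm,
              Real.enorm_eq_ofReal hδ.le]
          · simp [hx]
        simp only [enorm_eq_nnnorm, this]
        rw [lintegral_indicator hE]
        simp
      calc ENNReal.ofReal δ * hm E
          = eLpNorm (fun x => ((s x : ℝ) : ℂ)) 1 hm := hsnorm.symm
        _ ≤ α.toFun (fun x => ((s x : ℝ) : ℂ)) := hdom
        _ ≤ α.toFun (f' - g') := hαs
        _ = α.toFun (f - g) := hαeq.symm
        _ ≤ ε := hαg.le
    have hzero : ENNReal.ofReal δ * hm E = 0 := by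
      by_contra h
      have hpos : 0 < ENNReal.ofReal δ * hm E := pos_iff_ne_zero.mpr h
      rcases lt_or_ge (ENNReal.ofReal δ * hm E) ⊤ with hlt | htop
      · have := hle (ENNReal.ofReal δ * hm E / 2) (ENNReal.half_pos h)
        have h2 : ENNReal.ofReal δ * hm E / 2 < ENNReal.ofReal δ * hm E :=
          ENNReal.half_lt_self h hlt.ne
        exact absurd this (not_le.mpr h2)
      · have := hle 1 one_pos
        have : (⊤ : ℝ≥0∞) ≤ 1 := le_trans (top_le_iff.mpr (top_le_iff.mp htop)) this
        simp at this
    have : hm E = 0 := by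
      rcases mul_eq_zero.mp hzero with h | h
      · exact absurd h (by simp [ENNReal.ofReal_eq_zero, not_le, hδ])
      · exact h
    exact this
  -- conclude |f'| ≤ 1 a.e.
  have hnull : hm {x | 1 < ‖f' x‖} = 0 := by
    have hsub : {x | 1 < ‖f' x‖} ⊆
        ⋃ n : ℕ, {x | 1 + 1 / (n + 1 : ℝ) < ‖f' x‖} := by
      intro x hx
      have hx' : (1:ℝ) < ‖f' x‖ := hx
      obtain ⟨n, hn⟩ := exists_nat_one_div_lt (sub_pos.mpr hx')
      exact Set.mem_iUnion.mpr ⟨n, by simp only [Set.mem_setOf_eq]; push_cast; linarith⟩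
    refine measure_mono_null hsub ?_
    refine measure_iUnion_null fun n => key _ ?_
    positivity
  have hae1 : ∀ᵐ x ∂hm, ‖f' x‖ ≤ 1 := by
    have := measure_eq_zero_iff_ae_notMem.mp hnull
    filter_upwards [this] with x hx
    simpa [not_lt] using hx
  rw [eLpNorm_congr_ae hff']
  rw [eLpNorm_exponent_top]
  refine eLpNormEssSup_le_of_ae_nnnorm_bound (C := 1) ?_ |>.trans (by simp)
  filter_upwards [hae1] with x hx
  simpa [← NNReal.coe_le_coe, coe_nnnorm] using hx
end
end
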